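/- arXiv:1911.00207 — 2 statements merged into one kernel-verified Lean document; each statement's English description precedes it below -/
import Mathlib

section
/- Let M be a matroid on a finite set E with rank function r, and let (C_1, …, C_j) be a proper sequence of circuits of M. Then r(C_1 ∪ … ∪ C_j) ≤ Σ_{i=1}^{j} (|C_i \ C_{≤i−1}| − 1). -/
open Set Matroid

variable {α : Type*}

/-- A circuit of a matroid: a minimal dependent subset of the ground set. -/
def IsCircuit (M : Matroid α) (C : Set α) : Prop :=
  C ⊆ M.E ∧ ¬ M.Indep C ∧ ∀ e ∈ C, M.Indep (C \ {e})

/-- The (natural-number) rank of a set in a matroid: the size of a largest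
independent subset. -/
noncomputable def nr (M : Matroid α) (X : Set α) : ℕ :=
  sSup {k | ∃ I, I ⊆ X ∧ M.Indep I ∧ I.ncard = k}

/-- The rank of a matroid. -/
noncomputable def mrk (M : Matroid α) : ℕ := nr M M.E

/-- A cyclic set: a (possibly empty) union of circuits. -/
def Cyclic (M : Matroid α) (X : Set α) : Prop :=
  X ⊆ M.E ∧ ∀ e ∈ X, ∃ C, _root_.IsCircuit M C ∧ C ⊆ X ∧ e ∈ C

/-- A modular pair of sets in a matroid. -/
def ModPair (M : Matroid α) (X Y : Set α) : Prop :=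
  nr M X + nr M Y = nr M (X ∩ Y) + nr M (X ∪ Y)

/-- A coloop of a matroid: an element contained in every base. -/
def IsColoop (M : Matroid α) (e : α) : Prop := ∀ B, M.IsBase B → e ∈ B

/-- A proper sequence of circuits of a matroid: each circuit is not contained in the
union of the preceding ones. -/
def ProperCircuitSeq (M : Matroid α) {t : ℕ} (C : Fin t → Set α) : Prop :=
  (∀ i, _root_.IsCircuit M (C i)) ∧
    ∀ i : Fin t, 0 < (i : ℕ) → ¬ C i ⊆ ⋃ j ∈ {j : Fin t | j < i}, C j

section aux
variable [Fintype α] {M : Matroid α} {X Y I : Set α}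

lemma nr_bdd (M : Matroid α) (X : Set α) :
    BddAbove {k | ∃ I, I ⊆ X ∧ M.Indep I ∧ I.ncard = k} := by
  refine ⟨Fintype.card α, fun k hk => ?_⟩
  obtain ⟨I, -, -, rfl⟩ := hk
  calc I.ncard ≤ (Set.univ : Set α).ncard := Set.ncard_le_ncard (Set.subset_univ I) (Set.toFinite _)
    _ = Fintype.card α := by simp [Set.ncard_univ]

omit [Fintype α] in
lemma nr_nonempty (M : Matroid α) (X : Set α) :
    {k | ∃ I, I ⊆ X ∧ M.Indep I ∧ I.ncard = k}.Nonempty :=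
  ⟨0, ∅, empty_subset _, M.empty_indep, by simp⟩

lemma ncard_le_nr (hI : M.Indep I) (hIX : I ⊆ X) : I.ncard ≤ nr M X :=
  le_csSup (nr_bdd M X) ⟨I, hIX, hI, rfl⟩

lemma exists_nr (M : Matroid α) (X : Set α) :
    ∃ I, I ⊆ X ∧ M.Indep I ∧ I.ncard = nr M X := by
  have := Nat.sSup_mem (nr_nonempty M X) (nr_bdd M X)
  exact this

lemma nr_empty (M : Matroid α) : nr M (∅ : Set α) = 0 := by
  obtain ⟨I, hIX, -, h⟩ := exists_nr M (∅ : Set α)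
  rw [← h, Set.subset_empty_iff.mp hIX, ncard_empty]

lemma nr_le_of_subset_closure (h : X ⊆ M.closure Y) : nr M X ≤ nr M Y := by
  obtain ⟨J, hJ⟩ := M.exists_isBasis' Y
  have hJc : M.IsBasis J (M.closure Y) := hJ.isBasis_closure_right
  obtain ⟨I, hIX, hIind, hcard⟩ := exists_nr M X
  rw [← hcard]
  obtain ⟨I', hI', hII'⟩ := hIind.subset_isBasis_of_subset (hIX.trans h)
    (M.closure_subset_ground Y)
  have hcard2 : I'.encard = J.encard := hI'.encard_eq_encard hJc
  calc I.ncard ≤ I'.ncard := ncard_le_ncard hII' (Set.toFinite _)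
    _ = J.ncard := by rw [ncard_def, hcard2, ← ncard_def]
    _ ≤ nr M Y := ncard_le_nr hJ.indep hJ.subset

lemma nr_union_le (M : Matroid α) (X Y : Set α) :
    nr M (X ∪ Y) ≤ nr M X + (Y \ X).ncard := by
  obtain ⟨I, hIX, hIind, hcard⟩ := exists_nr M (X ∪ Y)
  rw [← hcard]
  have h1 : (I ∩ X).ncard ≤ nr M X :=
    ncard_le_nr (hIind.subset inter_subset_left) inter_subset_right
  have h2 : (I \ X).ncard ≤ (Y \ X).ncard := by
    refine ncard_le_ncard (fun x hx => ⟨?_, hx.2⟩) (Set.toFinite _)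
    rcases hIX hx.1 with h | h
    · exact absurd h hx.2
    · exact h
  have h3 : I.ncard = (I ∩ X).ncard + (I \ X).ncard := by
    rw [← ncard_inter_add_ncard_diff_eq_ncard I X (Set.toFinite _)]
  omega

lemma step_lemma {X Cs : Set α} (hCs : _root_.IsCircuit M Cs)
    (hXE : X ⊆ M.E) (h : ¬ Cs ⊆ X) :
    nr M (X ∪ Cs) + 1 ≤ nr M X + (Cs \ X).ncard := by
  obtain ⟨e, heC, heX⟩ := not_subset.mp h
  have hIe : M.Indep (Cs \ {e}) := hCs.2.2 e heC
  have hecl : e ∈ M.closure (Cs \ {e}) := by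
    rw [hIe.mem_closure_iff_of_notMem (by simp)]
    rw [insert_diff_singleton, insert_eq_of_mem heC]
    exact ⟨hCs.2.1, hCs.1⟩
  have hsub : X ∪ Cs ⊆ M.closure (X ∪ (Cs \ {e})) := by
    rintro x (hx | hx)
    · exact M.subset_closure _ (union_subset hXE (hIe.subset_ground)) (Or.inl hx)
    · rcases eq_or_ne x e with rfl | hne
      · exact M.closure_subset_closure subset_union_right hecl
      · exact M.subset_closure _ (union_subset hXE (hIe.subset_ground))
          (Or.inr ⟨hx, hne⟩)
  have h1 : nr M (X ∪ Cs) ≤ nr M (X ∪ (Cs \ {e})) := nr_le_of_subset_closure hsub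
  have h2 : nr M (X ∪ (Cs \ {e})) ≤ nr M X + ((Cs \ {e}) \ X).ncard := nr_union_le M _ _
  have heq : (Cs \ {e}) \ X = (Cs \ X) \ {e} := diff_diff_comm
  have hcard : ((Cs \ X) \ {e}).ncard + 1 = (Cs \ X).ncard :=
    ncard_diff_singleton_add_one ⟨heC, heX⟩ (Set.toFinite _)
  rw [heq] at h2
  omega

end aux

lemma biUnion_lt_castSucc_eq {n : ℕ} (C : Fin (n+1) → Set α) (i : Fin n) :
    ⋃ j' ∈ {j' : Fin (n+1) | j' < i.castSucc}, C j'
      = ⋃ j' ∈ {j' : Fin n | j' < i}, C j'.castSucc := by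
  ext x
  simp only [mem_iUnion, mem_setOf_eq, exists_prop]
  constructor
  · rintro ⟨k, hk, hx⟩
    have hk' : (k : ℕ) < (i : ℕ) := Fin.lt_def.mp hk
    have hkn : (k : ℕ) < n := hk'.trans i.isLt
    refine ⟨⟨k, hkn⟩, Fin.lt_def.mpr hk', ?_⟩
    have : (⟨(k : ℕ), hkn⟩ : Fin n).castSucc = k := by ext; simp
    rwa [this]
  · rintro ⟨k, hk, hx⟩
    exact ⟨k.castSucc, Fin.castSucc_lt_castSucc_iff.mpr hk, hx⟩

lemma biUnion_lt_last_eq {n : ℕ} (C : Fin (n+1) → Set α) :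
    ⋃ j' ∈ {j' : Fin (n+1) | j' < Fin.last n}, C j' = ⋃ i : Fin n, C i.castSucc := by
  ext x
  simp only [mem_iUnion, mem_setOf_eq, exists_prop]
  constructor
  · rintro ⟨k, hk, hx⟩
    have hkn : (k : ℕ) < n := Fin.lt_def.mp hk
    refine ⟨⟨k, hkn⟩, ?_⟩
    have : (⟨(k : ℕ), hkn⟩ : Fin n).castSucc = k := by ext; simp
    rwa [this]
  · rintro ⟨k, hx⟩
    exact ⟨k.castSucc, Fin.castSucc_lt_last k, hx⟩

lemma iUnion_fin_succ_eq {n : ℕ} (C : Fin (n+1) → Set α) :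
    ⋃ i, C i = (⋃ i : Fin n, C i.castSucc) ∪ C (Fin.last n) := by
  ext x
  simp only [mem_iUnion, mem_union]
  constructor
  · rintro ⟨k, hx⟩
    rcases eq_or_ne k (Fin.last n) with rfl | hne
    · exact Or.inr hx
    · have hkn : (k : ℕ) < n := lt_of_le_of_ne (Nat.lt_succ_iff.mp k.2)
        (fun h => hne (Fin.ext h))
      refine Or.inl ⟨⟨k, hkn⟩, ?_⟩
      have : (⟨(k : ℕ), hkn⟩ : Fin n).castSucc = k := by ext; simp
      rwa [this]
  · rintro (⟨k, hx⟩ | hx)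
    · exact ⟨k.castSucc, hx⟩
    · exact ⟨Fin.last n, hx⟩

/-- If `(C_1, …, C_j)` is a proper sequence of circuits of `M`, then
`r(C_1 ∪ … ∪ C_j) ≤ Σ_{i=1}^{j} (|C_i \ C_{≤ i−1}| − 1)`. -/
theorem rank_union_le_sum_of_properCircuitSeq [Fintype α] (M : Matroid α) {j : ℕ}
    (C : Fin j → Set α) (hC : ProperCircuitSeq M C) :
    nr M (⋃ i, C i) + j ≤ ∑ i : Fin j, (C i \ ⋃ j' ∈ {j' : Fin j | j' < i}, C j').ncard := by
  induction j with
  | zero =>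
    have h0 : (⋃ i : Fin 0, C i) = (∅ : Set α) := by
      simp
    simp [h0, nr_empty]
  | succ n ih =>
    have hcirc := hC.1
    have hD : ProperCircuitSeq M (fun i : Fin n => C i.castSucc) := by
      refine ⟨fun i => hcirc _, fun i hi => ?_⟩
      have h2 := hC.2 i.castSucc (by simpa using hi)
      rw [biUnion_lt_castSucc_eq] at h2
      simpa using h2
    have key := ih (fun i : Fin n => C i.castSucc) hD
    have hXE : (⋃ i : Fin n, C i.castSucc) ⊆ M.E :=
      iUnion_subset fun i => (hcirc i.castSucc).1
    have hlast : ¬ C (Fin.last n) ⊆ ⋃ i : Fin n, C i.castSucc := by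
      rcases Nat.eq_zero_or_pos n with rfl | hn
      · intro hsub
        have hX0 : (⋃ i : Fin 0, C i.castSucc) = (∅ : Set α) := by simp
        rw [hX0, subset_empty_iff] at hsub
        exact (hcirc (Fin.last 0)).2.1 (hsub ▸ M.empty_indep)
      · have h2 := hC.2 (Fin.last n) (by simpa using hn)
        rwa [biUnion_lt_last_eq] at h2
    have hstep := step_lemma (hcirc (Fin.last n)) hXE hlast
    rw [iUnion_fin_succ_eq, Fin.sum_univ_castSucc, biUnion_lt_last_eq]
    have hsum_eq : ∑ i : Fin n,
        (C i.castSucc \ ⋃ j' ∈ {j' : Fin (n+1) | j' < i.castSucc}, C j').ncard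
        = ∑ i : Fin n,
        (C i.castSucc \ ⋃ j' ∈ {j' : Fin n | j' < i}, C j'.castSucc).ncard := by
      refine Finset.sum_congr rfl fun i _ => ?_
      rw [biUnion_lt_castSucc_eq]
    rw [hsum_eq]
    omega
end

section
/- Let M be a matroid on a finite set E, let C be a family of non-spanning circuits of M, and let N be the free erection of M. If every cyclic flat of M is a union of circuits in C, then every cyclic flat of N is a union of circuits in C. -/
open Set Matroid

variable {α : Type*}

/-- `M` is the truncation of `N`: the two matroids have the same ground set and
`r_M(X) = min (r_N(X), r_N(E) − 1)` for every `X ⊆ E`. -/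
def IsTruncationOf (M N : Matroid α) : Prop :=
  M.E = N.E ∧ ∀ X ⊆ M.E, nr M X = min (nr N X) (mrk N - 1)

/-- `N` is an erection of `M`: either the trivial erection `N = M`, or `M` is the
truncation of `N`. -/
def IsErectionOf (N M : Matroid α) : Prop := N = M ∨ IsTruncationOf M N

/-- `N` is the free erection of `M`: it is an erection of `M` that is maximum in the
weak order among all erections of `M`. -/
def IsFreeErectionOf (N M : Matroid α) : Prop :=
  IsErectionOf N M ∧ ∀ N', IsErectionOf N' M → ∀ I, N'.Indep I → N.Indep I

/-- A modular cyclic family in `M`: a family of cyclic sets that is down-closed in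
the lattice of cyclic sets and closed under unions of modular pairs. -/
def ModularCyclicFamily (M : Matroid α) (𝓕 : Set (Set α)) : Prop :=
  (∀ C ∈ 𝓕, Cyclic M C) ∧
  (∀ C ∈ 𝓕, ∀ D, Cyclic M D → D ⊆ C → D ∈ 𝓕) ∧
  (∀ C ∈ 𝓕, ∀ D ∈ 𝓕, ModPair M C D → C ∪ D ∈ 𝓕)

/-- The modular cyclic closure of a family `𝓒` of cyclic sets: the smallest modular
cyclic family containing `𝓒`. -/
def mcClosure (M : Matroid α) (𝓒 : Set (Set α)) : Set (Set α) :=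
  {X | ∀ 𝓕, ModularCyclicFamily M 𝓕 → 𝓒 ⊆ 𝓕 → X ∈ 𝓕}

/-- The family of non-spanning cyclic flats of `M`. -/
def nsCyclicFlats (M : Matroid α) : Set (Set α) :=
  {C | Cyclic M C ∧ M.IsFlat C ∧ ¬ M.Spanning C}

/-- A hyperplane of `M`: a flat of rank `r(M) − 1`. -/
def IsHyperplane (M : Matroid α) (Z : Set α) : Prop :=
  M.IsFlat Z ∧ nr M Z + 1 = mrk M


set_option linter.unusedSectionVars false
set_option linter.unusedVariables false
set_option maxHeartbeats 1000000
section NR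

variable {M : Matroid α} [M.Finite] {B I J X Y C D : Set α} {e f x : α}

lemma nr_eq_of_basis' (h : M.IsBasis' I X) : nr M X = I.ncard := by
  apply IsGreatest.csSup_eq
  constructor
  · exact ⟨I, h.subset, h.indep, rfl⟩
  · rintro k ⟨J, hJX, hJ, rfl⟩
    obtain ⟨J', hJ', hJJ'⟩ := hJ.subset_isBasis'_of_subset hJX
    have hJI : J'.encard = I.encard := hJ'.encard_eq_encard h
    have hfin : J'.Finite := M.set_finite J' hJ'.indep.subset_ground
    calc J.ncard ≤ J'.ncard := Set.ncard_le_ncard hJJ' hfin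
    _ = I.ncard := by rw [Set.ncard_def, hJI, ← Set.ncard_def]

lemma exists_basis'_nr (M : Matroid α) [M.Finite] (X : Set α) :
    ∃ I, M.IsBasis' I X ∧ I.ncard = nr M X := by
  obtain ⟨I, hI⟩ := M.exists_isBasis' X
  exact ⟨I, hI, (nr_eq_of_basis' hI).symm⟩

lemma ncard_le_nr_s12 (hJ : M.Indep J) (hJX : J ⊆ X) : J.ncard ≤ nr M X := by
  obtain ⟨I, hI, hIcard⟩ := exists_basis'_nr M X
  obtain ⟨J', hJ', hJJ'⟩ := hJ.subset_isBasis'_of_subset hJX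
  have hJI : J'.encard = I.encard := hJ'.encard_eq_encard hI
  have hfin : J'.Finite := M.set_finite J' hJ'.indep.subset_ground
  calc J.ncard ≤ J'.ncard := Set.ncard_le_ncard hJJ' hfin
  _ = I.ncard := by rw [Set.ncard_def, hJI, ← Set.ncard_def]
  _ = nr M X := hIcard

lemma Matroid.Indep.nr_eq (hI : M.Indep I) : nr M I = I.ncard :=
  nr_eq_of_basis' hI.isBasis_self.isBasis'

lemma nr_mono (hXY : X ⊆ Y) : nr M X ≤ nr M Y := by
  obtain ⟨I, hI, hIcard⟩ := exists_basis'_nr M X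
  rw [← hIcard]
  exact ncard_le_nr_s12 hI.indep (hI.subset.trans hXY)

lemma nr_le_ncard (X : Set α) (hX : X.Finite) : nr M X ≤ X.ncard := by
  obtain ⟨I, hI, hIcard⟩ := exists_basis'_nr M X
  rw [← hIcard]
  exact Set.ncard_le_ncard hI.subset hX

lemma nr_le_mrk (M : Matroid α) [M.Finite] (X : Set α) : nr M X ≤ mrk M := by
  obtain ⟨I, hI, hIcard⟩ := exists_basis'_nr M X
  rw [← hIcard]
  exact ncard_le_nr_s12 hI.indep hI.indep.subset_ground

lemma indep_iff_nr (hX : X ⊆ M.E) : M.Indep X ↔ nr M X = X.ncard := by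
  refine ⟨fun h => h.nr_eq, fun h => ?_⟩
  obtain ⟨I, hI, hIcard⟩ := exists_basis'_nr M X
  have hfin : X.Finite := M.set_finite X hX
  have : I = X := Set.eq_of_subset_of_ncard_le hI.subset (by rw [hIcard, h]) hfin
  exact this ▸ hI.indep

lemma Matroid.IsBase.nr_ground_eq (hB : M.IsBase B) : mrk M = B.ncard :=
  nr_eq_of_basis' hB.isBasis_ground.isBasis'

lemma base_of_indep_nr (hI : M.Indep I) (h : I.ncard = mrk M) : M.IsBase I := by
  obtain ⟨B, hB, hIB⟩ := hI.exists_isBase_superset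
  have hfin : B.Finite := M.set_finite B hB.subset_ground
  have : I = B := Set.eq_of_subset_of_ncard_le hIB (by rw [h, hB.nr_ground_eq]) hfin
  exact this ▸ hB

lemma nr_closure_eq (M : Matroid α) [M.Finite] (X : Set α) : nr M (M.closure X) = nr M X := by
  obtain ⟨I, hI, hIcard⟩ := exists_basis'_nr M X
  rw [← hIcard, ← nr_eq_of_basis' hI.isBasis_closure_right.isBasis']

lemma mem_closure_iff_nr (hX : X ⊆ M.E) (he : e ∈ M.E) :
    e ∈ M.closure X ↔ nr M (insert e X) = nr M X := by
  obtain ⟨I, hI⟩ := M.exists_isBasis X hX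
  constructor
  · intro hecl
    refine le_antisymm ?_ (nr_mono (subset_insert _ _))
    have h1 : insert e X ⊆ M.closure X := insert_subset hecl (M.subset_closure X hX)
    calc nr M (insert e X) ≤ nr M (M.closure X) := nr_mono h1
    _ = nr M X := nr_closure_eq M X
  · intro hr
    by_contra hecl
    have heI : e ∉ M.closure I := by rwa [hI.closure_eq_closure]
    have hind : M.Indep (insert e I) := by
      rw [hI.indep.insert_indep_iff]
      exact Or.inl ⟨he, heI⟩
    have heI' : e ∉ I := fun h => heI (M.mem_closure_of_mem h hI.indep.subset_ground)
    have hIfin : I.Finite := M.set_finite I hI.indep.subset_ground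
    have hcard : (insert e I).ncard = I.ncard + 1 := Set.ncard_insert_of_notMem heI' hIfin
    have h2 : (insert e I).ncard ≤ nr M (insert e X) :=
      ncard_le_nr_s12 hind (insert_subset_insert hI.subset)
    have h3 : nr M X = I.ncard := nr_eq_of_basis' hI.isBasis'
    omega

lemma spanning_iff_nr (hX : X ⊆ M.E) : M.Spanning X ↔ nr M X = mrk M := by
  constructor
  · intro h
    obtain ⟨B, hB, hBX⟩ := h.exists_isBase_subset
    refine le_antisymm (nr_le_mrk M X) ?_
    rw [hB.nr_ground_eq]
    exact ncard_le_nr_s12 hB.indep hBX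
  · intro h
    obtain ⟨I, hI, hIcard⟩ := exists_basis'_nr M X
    have hIB : M.IsBase I := base_of_indep_nr hI.indep (by omega)
    exact hIB.spanning_of_superset hI.subset hX

lemma nr_submod (M : Matroid α) [M.Finite] (X Y : Set α) :
    nr M (X ∪ Y) + nr M (X ∩ Y) ≤ nr M X + nr M Y := by
  obtain ⟨I, hI, hIcard⟩ := exists_basis'_nr M (X ∩ Y)
  obtain ⟨J, hJ, hIJ⟩ := hI.indep.subset_isBasis'_of_subset (hI.subset.trans (inter_subset_left.trans subset_union_left))
  have hJfin : J.Finite := M.set_finite J hJ.indep.subset_ground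
  have h1 : (J ∩ X).ncard ≤ nr M X := ncard_le_nr_s12 (hJ.indep.inter_right X) inter_subset_right
  have h2 : (J ∩ Y).ncard ≤ nr M Y := ncard_le_nr_s12 (hJ.indep.inter_right Y) inter_subset_right
  have hsum : ((J ∩ X) ∪ (J ∩ Y)).ncard + ((J ∩ X) ∩ (J ∩ Y)).ncard
      = (J ∩ X).ncard + (J ∩ Y).ncard :=
    Set.ncard_union_add_ncard_inter _ _ (hJfin.subset inter_subset_left)
      (hJfin.subset inter_subset_left)
  have hU : (J ∩ X) ∪ (J ∩ Y) = J := by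
    rw [← inter_union_distrib_left]; exact inter_eq_left.mpr hJ.subset
  have hInt : I ⊆ (J ∩ X) ∩ (J ∩ Y) := by
    intro x hx
    exact ⟨⟨hIJ hx, (hI.subset hx).1⟩, hIJ hx, (hI.subset hx).2⟩
  have h3 : I.ncard ≤ ((J ∩ X) ∩ (J ∩ Y)).ncard :=
    Set.ncard_le_ncard hInt (hJfin.subset (inter_subset_left.trans inter_subset_left))
  have h4 : nr M (X ∪ Y) = J.ncard := nr_eq_of_basis' hJ
  rw [hU] at hsum
  rw [h4, ← hIcard]
  omega

lemma nr_le_nr_diff_singleton_add_one (M : Matroid α) [M.Finite] (X : Set α) (e : α) :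
    nr M X ≤ nr M (X \ {e}) + 1 := by
  obtain ⟨I, hI, hIcard⟩ := exists_basis'_nr M X
  have h1 : (I \ {e}).ncard ≤ nr M (X \ {e}) :=
    ncard_le_nr_s12 (hI.indep.diff _) (diff_subset_diff_left hI.subset)
  have hIfin : I.Finite := M.set_finite I hI.indep.subset_ground
  have h2 : I.ncard ≤ (I \ {e}).ncard + 1 := by
    by_cases he : e ∈ I
    · have h5 : 0 < I.ncard := (Set.ncard_pos hIfin).mpr ⟨e, he⟩
      rw [Set.ncard_diff_singleton_of_mem he]; omega
    · rw [Set.diff_singleton_eq_self he]; omega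
  omega

end NR
section Circuits

variable {M : Matroid α} [M.Finite] {B I J X Y C D : Set α} {e f x : α}

lemma IsCircuit.dep (hC : _root_.IsCircuit M C) : ¬ M.Indep C := hC.2.1

lemma IsCircuit.nonempty (hC : _root_.IsCircuit M C) : C.Nonempty := by
  rcases C.eq_empty_or_nonempty with rfl | h
  · exact absurd M.empty_indep hC.2.1
  · exact h

lemma not_indep_of_circuit_subset (hC : _root_.IsCircuit M C) (hCX : C ⊆ X) (hX : X ⊆ M.E) :
    ¬ M.Indep X := fun h => hC.dep (h.subset hCX)

private lemma exists_circuit_aux [M.Finite] : ∀ n (D : Set α), D.ncard ≤ n → D ⊆ M.E →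
    ¬ M.Indep D → ∃ C, _root_.IsCircuit M C ∧ C ⊆ D := by
  intro n
  induction n with
  | zero =>
    intro D hcard hDE hdep
    have hfin : D.Finite := M.set_finite D hDE
    rw [Nat.le_zero, Set.ncard_eq_zero hfin] at hcard
    exact absurd (hcard ▸ M.empty_indep) hdep
  | succ n ih =>
    intro D hcard hDE hdep
    by_cases h : ∀ e ∈ D, M.Indep (D \ {e})
    · exact ⟨D, ⟨hDE, hdep, h⟩, Subset.rfl⟩
    · push_neg at h
      obtain ⟨e, heD, hne⟩ := h
      have hfin : D.Finite := M.set_finite D hDE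
      have hlt : (D \ {e}).ncard < D.ncard := Set.ncard_diff_singleton_lt_of_mem heD hfin
      obtain ⟨C, hC, hCsub⟩ := ih (D \ {e}) (by omega) (diff_subset.trans hDE) hne
      exact ⟨C, hC, hCsub.trans diff_subset⟩

lemma exists_circuit_of_dep (hDE : D ⊆ M.E) (hdep : ¬ M.Indep D) :
    ∃ C, _root_.IsCircuit M C ∧ C ⊆ D :=
  exists_circuit_aux D.ncard D le_rfl hDE hdep

lemma exists_circuit_of_mem_closure (hX : X ⊆ M.E) (he : e ∈ M.closure X) (heX : e ∉ X) :
    ∃ C, _root_.IsCircuit M C ∧ e ∈ C ∧ C ⊆ insert e X := by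
  obtain ⟨I, hI⟩ := M.exists_isBasis X hX
  have hecl : e ∈ M.closure I := by rwa [hI.closure_eq_closure]
  have heI : e ∉ I := fun h => heX (hI.subset h)
  have hdep : ¬ M.Indep (insert e I) := by
    intro h
    rw [hI.indep.insert_indep_iff_of_notMem heI] at h
    exact h.2 hecl
  obtain ⟨C, hC, hCsub⟩ := exists_circuit_of_dep
    (insert_subset (M.mem_ground_of_mem_closure hecl) hI.indep.subset_ground) hdep
  have heC : e ∈ C := by
    by_contra heC
    exact hC.dep (hI.indep.subset (fun x hx => ((hCsub hx).resolve_left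
      (fun h => heC (h ▸ hx)) : x ∈ I)))
  exact ⟨C, hC, heC, hCsub.trans (insert_subset_insert hI.subset)⟩

lemma nr_add_one_le_mrk_of_not_spanning (hX : X ⊆ M.E) (h : ¬ M.Spanning X) :
    nr M X + 1 ≤ mrk M := by
  have h1 := nr_le_mrk M X
  have h2 : nr M X ≠ mrk M := fun hh => h ((spanning_iff_nr hX).mpr hh)
  omega

lemma not_spanning_of_nr_lt (hX : X ⊆ M.E) (h : nr M X < mrk M) : ¬ M.Spanning X :=
  fun hh => by rw [(spanning_iff_nr hX).mp hh] at h; omega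

lemma IsCircuit.mem_closure_diff (hC : _root_.IsCircuit M C) (he : e ∈ C) :
    e ∈ M.closure (C \ {e}) := by
  have hind : M.Indep (C \ {e}) := hC.2.2 e he
  have hdep : M.Dep (insert e (C \ {e})) := by
    rw [insert_diff_singleton, insert_eq_of_mem he]
    exact ⟨hC.dep, hC.1⟩
  rw [hind.insert_dep_iff] at hdep
  exact hdep.1

lemma IsCircuit.closure_diff_eq (hC : _root_.IsCircuit M C) (he : e ∈ C) :
    M.closure (C \ {e}) = M.closure C := by
  have h2 : insert e (C \ {e}) = C := by rw [insert_diff_singleton, insert_eq_of_mem he]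
  calc M.closure (C \ {e}) = M.closure (insert e (C \ {e})) :=
        (closure_insert_eq_of_mem_closure (hC.mem_closure_diff he)).symm
  _ = M.closure C := by rw [h2]

lemma IsCircuit.nr_add_one (hC : _root_.IsCircuit M C) : nr M C + 1 = C.ncard := by
  obtain ⟨e, he⟩ := hC.nonempty
  have hfin : C.Finite := M.set_finite C hC.1
  have h1 : (C \ {e}).ncard ≤ nr M C := ncard_le_nr_s12 (hC.2.2 e he) diff_subset
  have h2 : nr M C ≠ C.ncard := fun h => hC.dep ((indep_iff_nr hC.1).mpr h)
  have h3 : nr M C ≤ C.ncard := nr_le_ncard C hfin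
  have h4 : (C \ {e}).ncard + 1 = C.ncard := by
    rw [Set.ncard_diff_singleton_of_mem he]
    have : 0 < C.ncard := (Set.ncard_pos hfin).mpr ⟨e, he⟩
    omega
  omega

lemma IsCircuit.base_diff_of_spanning (hC : _root_.IsCircuit M C) (hsp : M.Spanning C) (he : e ∈ C) :
    M.IsBase (C \ {e}) := by
  have h1 : M.Spanning (C \ {e}) := by
    constructor
    · rw [hC.closure_diff_eq he]; exact hsp.closure_eq
    · exact diff_subset.trans hC.1
  exact h1.isBase_of_indep (hC.2.2 e he)

lemma flat_closure (M : Matroid α) (X : Set α) : M.IsFlat (M.closure X) := by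
  exact isFlat_closure X

lemma cyclic_closure_circuit (hC : _root_.IsCircuit M C) : Cyclic M (M.closure C) := by
  refine ⟨M.closure_subset_ground C, fun x hx => ?_⟩
  by_cases hxC : x ∈ C
  · exact ⟨C, hC, M.subset_closure C hC.1, hxC⟩
  · obtain ⟨e, he⟩ := hC.nonempty
    have hx' : x ∈ M.closure (C \ {e}) := by rwa [hC.closure_diff_eq he]
    have hxCe : x ∉ C \ {e} := fun h => hxC h.1
    obtain ⟨C', hC', hxC', hC'sub⟩ :=
      exists_circuit_of_mem_closure (diff_subset.trans hC.1) hx' hxCe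
    refine ⟨C', hC', hC'sub.trans ?_, hxC'⟩
    exact insert_subset hx (diff_subset.trans (M.subset_closure C hC.1))

lemma cyclic_ground_of_no_coloop
    (h : ∀ x ∈ M.E, M.Spanning (M.E \ {x})) : Cyclic M M.E := by
  refine ⟨Subset.rfl, fun x hx => ?_⟩
  have hcl : x ∈ M.closure (M.E \ {x}) := by
    rw [(h x hx).closure_eq]; exact hx
  obtain ⟨C, hC, hxC, hCsub⟩ := exists_circuit_of_mem_closure diff_subset hcl
    (fun hh => hh.2 rfl)
  exact ⟨C, hC, hC.1, hxC⟩

end Circuits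
/-- The key invariant: every element of `S` that lies on a circuit inside `S`
lies on a non-spanning circuit inside `S`. -/
def Nice (M : Matroid α) (S : Set α) : Prop :=
  ∀ e D, _root_.IsCircuit M D → e ∈ D → D ⊆ S →
    ∃ D', _root_.IsCircuit M D' ∧ ¬ M.Spanning D' ∧ e ∈ D' ∧ D' ⊆ S

section NiceLemmas

variable {M : Matroid α} [M.Finite] {A B I J S X Y C D : Set α} {e f x : α}

lemma circuit_through_of_spanning_diff (hZ : X ⊆ M.E) (heZ : e ∈ X)
    (hsp : M.Spanning (X \ {e})) : ∃ C, _root_.IsCircuit M C ∧ e ∈ C ∧ C ⊆ X := by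
  have he : e ∈ M.closure (X \ {e}) := by rw [hsp.closure_eq]; exact hZ heZ
  obtain ⟨C, hC, heC, hCsub⟩ :=
    exists_circuit_of_mem_closure (diff_subset.trans hZ) he (fun h => h.2 rfl)
  exact ⟨C, hC, heC, hCsub.trans (insert_subset heZ diff_subset)⟩

lemma circuit_in_part (hB : M.IsBase B) (hBX : B ⊆ X) (hBY : B ⊆ Y)
    (hXE : X ⊆ M.E) (hYE : Y ⊆ M.E) (hD : _root_.IsCircuit M D) (hDsp : M.Spanning D)
    (heD : e ∈ D) (hDXY : D ⊆ X ∪ Y) :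
    (∃ C, _root_.IsCircuit M C ∧ e ∈ C ∧ C ⊆ X) ∨ (∃ C, _root_.IsCircuit M C ∧ e ∈ C ∧ C ⊆ Y) := by
  by_cases heB : e ∈ B
  · by_contra hcon
    rw [not_or] at hcon
    obtain ⟨h1, h2⟩ := hcon
    have hXns : ¬ M.Spanning (X \ {e}) := by
      intro hsp
      obtain ⟨C, hC, heC, hCX⟩ := circuit_through_of_spanning_diff hXE (hBX heB) hsp
      exact h1 ⟨C, hC, heC, hCX⟩
    have hYns : ¬ M.Spanning (Y \ {e}) := by
      intro hsp
      obtain ⟨C, hC, heC, hCY⟩ := circuit_through_of_spanning_diff hYE (hBY heB) hsp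
      exact h2 ⟨C, hC, heC, hCY⟩
    have ha := nr_add_one_le_mrk_of_not_spanning (diff_subset.trans hXE) hXns
    have hb := nr_add_one_le_mrk_of_not_spanning (diff_subset.trans hYE) hYns
    have hBfin : B.Finite := M.set_finite B hB.subset_ground
    have hBcard : (B \ {e}).ncard + 1 = B.ncard := by
      rw [Set.ncard_diff_singleton_of_mem heB]
      have : 0 < B.ncard := (Set.ncard_pos hBfin).mpr ⟨e, heB⟩
      omega
    have hc : (B \ {e}).ncard ≤ nr M ((X \ {e}) ∩ (Y \ {e})) :=
      ncard_le_nr_s12 (hB.indep.diff _)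
        (subset_inter (diff_subset_diff_left hBX) (diff_subset_diff_left hBY))
    have hDbase : M.IsBase (D \ {e}) := hD.base_diff_of_spanning hDsp heD
    have hd : (D \ {e}).ncard ≤ nr M ((X \ {e}) ∪ (Y \ {e})) := by
      refine ncard_le_nr_s12 hDbase.indep ?_
      rw [← union_diff_distrib]
      exact diff_subset_diff_left hDXY
    have hrB : mrk M = B.ncard := hB.nr_ground_eq
    have hrD : mrk M = (D \ {e}).ncard := hDbase.nr_ground_eq
    have hsub := nr_submod M (X \ {e}) (Y \ {e})
    omega
  · rcases hDXY heD with hX | hY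
    · left
      refine circuit_through_of_spanning_diff hXE hX ?_
      rw [spanning_iff_exists_isBase_subset (diff_subset.trans hXE)]
      exact ⟨B, hB, fun b hb => ⟨hBX hb, fun hbe => heB (hbe ▸ hb)⟩⟩
    · right
      refine circuit_through_of_spanning_diff hYE hY ?_
      rw [spanning_iff_exists_isBase_subset (diff_subset.trans hYE)]
      exact ⟨B, hB, fun b hb => ⟨hBY hb, fun hbe => heB (hbe ▸ hb)⟩⟩

lemma circuit_cl_step (hSE : S ⊆ M.E) (hAS : A ⊆ S) (hAns : ¬ M.Spanning A)
    (hD : _root_.IsCircuit M D) (hDsp : M.Spanning D) (heD : e ∈ D)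
    (hsub : D ⊆ S ∪ M.closure A) :
    (∃ C, _root_.IsCircuit M C ∧ ¬ M.Spanning C ∧ e ∈ C ∧ C ⊆ S ∪ M.closure A) ∨
    (∃ C, _root_.IsCircuit M C ∧ e ∈ C ∧ C ⊆ S) := by
  set Q := M.closure A with hQdef
  have hQE : Q ⊆ M.E := M.closure_subset_ground A
  have hAE : A ⊆ M.E := hAS.trans hSE
  have hAQ : A ⊆ Q := M.subset_closure A hAE
  have hQns : ¬ M.Spanning Q := by
    intro h
    apply hAns
    rw [spanning_iff_nr hAE]
    rw [spanning_iff_nr hQE] at h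
    rwa [hQdef, nr_closure_eq] at h
  have hclQ : M.closure Q = Q := by rw [hQdef, closure_closure]
  have heE : e ∈ M.E := hD.1 heD
  have hnsp_of_subQ : ∀ C : Set α, C ⊆ Q → ¬ M.Spanning C := by
    intro C hCQ hsp
    exact hQns (hsp.superset hCQ hQE)
  by_cases ha : e ∈ M.closure (Q \ {e})
  · have heQ : e ∈ Q := by
      exact ((M.closure_subset_closure diff_subset).trans hclQ.subset) ha
    obtain ⟨C, hC, heC, hCsub⟩ :=
      exists_circuit_of_mem_closure (diff_subset.trans hQE) ha (fun h => h.2 rfl)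
    have hCQ : C ⊆ Q := hCsub.trans (insert_subset heQ diff_subset)
    exact Or.inl ⟨C, hC, hnsp_of_subQ C hCQ, heC, hCQ.trans subset_union_right⟩
  · have heS : e ∈ S := by
      by_cases heA : e ∈ A
      · exact hAS heA
      · rcases hsub heD with h | h
        · exact h
        · exfalso
          apply ha
          have hsubA : A ⊆ Q \ {e} := fun a haA => ⟨hAQ haA, fun hae => heA (hae ▸ haA)⟩
          exact M.closure_subset_closure hsubA h
    by_cases hb1 : e ∈ M.closure (S \ {e})
    · obtain ⟨C, hC, heC, hCsub⟩ :=
        exists_circuit_of_mem_closure (diff_subset.trans hSE) hb1 (fun h => h.2 rfl)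
      exact Or.inr ⟨C, hC, heC, hCsub.trans (insert_subset heS diff_subset)⟩
    · have hSns : ¬ M.Spanning (S \ {e}) := fun h => hb1 (by rw [h.closure_eq]; exact heE)
      by_cases hf : ∃ f ∈ Q \ {e}, f ∉ M.closure (A \ {e})
      · obtain ⟨f, hfQ, hfncl⟩ := hf
        have hAsub : A ⊆ insert e (A \ {e}) := by
          intro a haA
          by_cases hae : a = e
          · exact hae ▸ mem_insert _ _
          · exact mem_insert_of_mem _ ⟨haA, hae⟩
        have hfc : f ∈ M.closure (insert e (A \ {e})) :=
          M.closure_subset_closure hAsub hfQ.1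
        have hex := Matroid.closure_exchange (X := A \ {e}) (e := f) (f := e) ⟨hfc, hfncl⟩
        have hsubQ : insert f (A \ {e}) ⊆ Q := insert_subset hfQ.1 (diff_subset.trans hAQ)
        have heQ : e ∈ Q := by
          exact ((M.closure_subset_closure hsubQ).trans hclQ.subset) hex.1
        have hnotmem : e ∉ insert f (A \ {e}) := by
          rintro (rfl | h)
          · exact hfQ.2 rfl
          · exact h.2 rfl
        obtain ⟨C, hC, heC, hCsub⟩ :=
          exists_circuit_of_mem_closure (hsubQ.trans hQE) hex.1 hnotmem
        have hCQ : C ⊆ Q := hCsub.trans (insert_subset heQ hsubQ)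
        exact Or.inl ⟨C, hC, hnsp_of_subQ C hCQ, heC, hCQ.trans subset_union_right⟩
      · push_neg at hf
        exfalso
        have hQe : Q \ {e} ⊆ M.closure (A \ {e}) := fun f hfQ => hf f hfQ
        have h1 : nr M (Q \ {e}) ≤ nr M (A \ {e}) := by
          calc nr M (Q \ {e}) ≤ nr M (M.closure (A \ {e})) := nr_mono hQe
          _ = nr M (A \ {e}) := nr_closure_eq M _
        have h2 := nr_add_one_le_mrk_of_not_spanning (diff_subset.trans hSE) hSns
        have hDbase : M.IsBase (D \ {e}) := hD.base_diff_of_spanning hDsp heD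
        have h3 : (D \ {e}).ncard ≤ nr M ((S \ {e}) ∪ (Q \ {e})) := by
          refine ncard_le_nr_s12 hDbase.indep ?_
          rw [← union_diff_distrib]
          exact diff_subset_diff_left hsub
        have hrD : mrk M = (D \ {e}).ncard := hDbase.nr_ground_eq
        have h4 : nr M (A \ {e}) ≤ nr M ((S \ {e}) ∩ (Q \ {e})) := by
          refine nr_mono ?_
          exact subset_inter (diff_subset_diff_left hAS) (diff_subset_diff_left hAQ)
        have hsubm := nr_submod M (S \ {e}) (Q \ {e})
        omega

lemma nice_of_indep (hI : M.Indep I) : Nice M I :=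
  fun _ D hD _ hDI => absurd (hI.subset hDI) hD.dep

lemma Nice.union (hX : Nice M X) (hY : Nice M Y) (hXE : X ⊆ M.E) (hYE : Y ⊆ M.E)
    (hB : M.IsBase B) (hBX : B ⊆ X) (hBY : B ⊆ Y) : Nice M (X ∪ Y) := by
  intro e D hD heD hDsub
  by_cases hsp : M.Spanning D
  · rcases circuit_in_part hB hBX hBY hXE hYE hD hsp heD hDsub with
      ⟨C, hC, heC, hCX⟩ | ⟨C, hC, heC, hCY⟩
    · obtain ⟨D', hD', hns, heD', hD'X⟩ := hX e C hC heC hCX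
      exact ⟨D', hD', hns, heD', hD'X.trans subset_union_left⟩
    · obtain ⟨D', hD', hns, heD', hD'Y⟩ := hY e C hC heC hCY
      exact ⟨D', hD', hns, heD', hD'Y.trans subset_union_right⟩
  · exact ⟨D, hD, hsp, heD, hDsub⟩

lemma Nice.cl_step (hS : Nice M S) (hSE : S ⊆ M.E) (hAS : A ⊆ S)
    (hAns : ¬ M.Spanning A) : Nice M (S ∪ M.closure A) := by
  intro e D hD heD hDsub
  by_cases hsp : M.Spanning D
  · rcases circuit_cl_step hSE hAS hAns hD hsp heD hDsub with
      ⟨C, hC, hns, heC, hCsub⟩ | ⟨C, hC, heC, hCS⟩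
    · exact ⟨C, hC, hns, heC, hCsub⟩
    · obtain ⟨D', hD', hns, heD', hD'S⟩ := hS e C hC heC hCS
      exact ⟨D', hD', hns, heD', hD'S.trans subset_union_left⟩
  · exact ⟨D, hD, hsp, heD, hDsub⟩

end NiceLemmas
section Tower

/-- One step of the block-expansion operator used to build the hyperplanes of the
free erection. -/
def towerStep (M : Matroid α) (h : Set α → Set α) : Set α → Set α := fun B =>
  h B ∪ ⋃₀ ((fun A => M.closure A) '' {A | A ⊆ h B ∧ ¬ M.Spanning A}
    ∪ (fun B' => h B') '' {B' | M.IsBase B' ∧ (B' ⊆ h B ∨ B ⊆ h B')})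

/-- Iterates of the block-expansion operator starting from the identity. -/
def towerSeq (M : Matroid α) : ℕ → (Set α → Set α)
  | 0 => id
  | n + 1 => towerStep M (towerSeq M n)

variable {M : Matroid α} {A B B' I J S X Y C D : Set α} {e f x : α}

lemma subset_towerStep (M : Matroid α) (h : Set α → Set α) (B : Set α) :
    h B ⊆ towerStep M h B := subset_union_left

lemma towerSeq_le_succ (M : Matroid α) (n : ℕ) (B : Set α) :
    towerSeq M n B ⊆ towerSeq M (n + 1) B := subset_towerStep M _ B

lemma towerSeq_mono (M : Matroid α) {m n : ℕ} (hmn : m ≤ n) (B : Set α) :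
    towerSeq M m B ⊆ towerSeq M n B := by
  induction n with
  | zero => rw [Nat.le_zero] at hmn; subst hmn; exact Subset.rfl
  | succ n ih =>
    rcases Nat.lt_or_ge m (n+1) with h | h
    · exact (ih (by omega)).trans (towerSeq_le_succ M n B)
    · have : m = n + 1 := by omega
      subst this; exact Subset.rfl

lemma exists_towerSeq_fix (M : Matroid α) [Finite α] :
    ∃ n, towerSeq M (n + 1) = towerSeq M n := by
  by_contra hcon
  push_neg at hcon
  have : Finite (Set α → Set α) := by infer_instance
  obtain ⟨m, n, hne, heq⟩ := Finite.exists_ne_map_eq_of_infinite (towerSeq M)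
  rcases hne.lt_or_gt with h | h
  · apply hcon m
    apply funext; intro B
    exact subset_antisymm (heq ▸ towerSeq_mono M (by omega : m + 1 ≤ n) B)
      (towerSeq_le_succ M m B)
  · apply hcon n
    apply funext; intro B
    exact subset_antisymm (heq.symm ▸ towerSeq_mono M (by omega : n + 1 ≤ m) B)
      (towerSeq_le_succ M n B)

/-- The limit of the tower: the minimal "valid" block function. -/
noncomputable def hstar (M : Matroid α) [Finite α] : Set α → Set α :=
  towerSeq M (exists_towerSeq_fix M).choose

lemma hstar_fix (M : Matroid α) [Finite α] : towerStep M (hstar M) = hstar M :=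
  (exists_towerSeq_fix M).choose_spec

lemma nice_fold [M.Finite] {S₀ : Set α} (hS0n : Nice M S₀) (hS0E : S₀ ⊆ M.E)
    {B₀ : Set α} (hB₀ : M.IsBase B₀) (hB₀S : B₀ ⊆ S₀)
    (𝒮 : Set (Set α)) (h𝒮fin : 𝒮.Finite) :
    (∀ T ∈ 𝒮, (∃ A, A ⊆ S₀ ∧ ¬ M.Spanning A ∧ T = M.closure A) ∨
      (Nice M T ∧ T ⊆ M.E ∧ ∃ Bs, M.IsBase Bs ∧ Bs ⊆ T ∧ Bs ⊆ S₀)) →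
    Nice M (S₀ ∪ ⋃₀ 𝒮) ∧ (S₀ ∪ ⋃₀ 𝒮) ⊆ M.E := by
  refine Set.Finite.induction_on
    (motive := fun 𝒯 _ => (∀ T ∈ 𝒯, (∃ A, A ⊆ S₀ ∧ ¬ M.Spanning A ∧ T = M.closure A) ∨
      (Nice M T ∧ T ⊆ M.E ∧ ∃ Bs, M.IsBase Bs ∧ Bs ⊆ T ∧ Bs ⊆ S₀)) →
      Nice M (S₀ ∪ ⋃₀ 𝒯) ∧ (S₀ ∪ ⋃₀ 𝒯) ⊆ M.E) 𝒮 h𝒮fin ?_ ?_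
  · intro _
    rw [sUnion_empty, union_empty]; exact ⟨hS0n, hS0E⟩
  · intro T 𝒮' hT𝒮 h𝒮'fin ih hT
    have ihh := ih (fun T' hT' => hT T' (mem_insert_of_mem _ hT'))
    have hrw : S₀ ∪ ⋃₀ insert T 𝒮' = (S₀ ∪ ⋃₀ 𝒮') ∪ T := by
      rw [sUnion_insert]
      ac_rfl
    rw [hrw]
    rcases hT T (mem_insert _ _) with ⟨A, hAS, hAns, rfl⟩ | ⟨hTn, hTE, Bs, hBs, hBsT, hBsS⟩
    · exact ⟨ihh.1.cl_step ihh.2 (hAS.trans subset_union_left) hAns,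
        union_subset ihh.2 (M.closure_subset_ground A)⟩
    · exact ⟨ihh.1.union hTn ihh.2 hTE hBs (hBsS.trans subset_union_left) hBsT,
        union_subset ihh.2 hTE⟩

end Tower
section HStar

variable {M : Matroid α} {A B B' I J S X Y C D : Set α} {e f x : α}

lemma towerSeq_inv [Finite α] [M.Finite] (n : ℕ) :
    ∀ B, M.IsBase B → B ⊆ towerSeq M n B ∧ towerSeq M n B ⊆ M.E ∧ Nice M (towerSeq M n B) := by
  induction n with
  | zero => exact fun B hB => ⟨Subset.rfl, hB.subset_ground, nice_of_indep hB.indep⟩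
  | succ n ih =>
    intro B hB
    obtain ⟨h1, h2, h3⟩ := ih B hB
    have hfold := nice_fold h3 h2 hB h1
      ((fun A => M.closure A) '' {A | A ⊆ towerSeq M n B ∧ ¬ M.Spanning A}
        ∪ (fun B' => towerSeq M n B') '' {B' | M.IsBase B' ∧
          (B' ⊆ towerSeq M n B ∨ B ⊆ towerSeq M n B')})
      (Set.toFinite _) ?_
    · refine ⟨h1.trans (towerSeq_le_succ M n B), ?_, ?_⟩
      · exact hfold.2
      · exact hfold.1
    · rintro T (⟨A, ⟨hA1, hA2⟩, rfl⟩ | ⟨B'', ⟨hB''1, hB''2⟩, rfl⟩)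
      · exact Or.inl ⟨A, hA1, hA2, rfl⟩
      · right
        obtain ⟨g1, g2, g3⟩ := ih B'' hB''1
        refine ⟨g3, g2, ?_⟩
        rcases hB''2 with h | h
        · exact ⟨B'', hB''1, g1, h⟩
        · exact ⟨B, hB, h, h1⟩

lemma base_subset_hstar [Finite α] [M.Finite] (hB : M.IsBase B) : B ⊆ hstar M B :=
  (towerSeq_inv _ B hB).1

lemma hstar_subset_ground [Finite α] [M.Finite] (hB : M.IsBase B) : hstar M B ⊆ M.E :=
  (towerSeq_inv _ B hB).2.1

lemma nice_hstar [Finite α] [M.Finite] (hB : M.IsBase B) : Nice M (hstar M B) :=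
  (towerSeq_inv _ B hB).2.2

lemma hstar_mclosed [Finite α] [M.Finite] (hB : M.IsBase B) (hA : A ⊆ hstar M B)
    (hns : ¬ M.Spanning A) : M.closure A ⊆ hstar M B := by
  have h1 : M.closure A ⊆ towerStep M (hstar M) B := by
    refine subset_union_right.trans' ?_
    refine subset_sUnion_of_mem ?_
    exact mem_union_left _ ⟨A, ⟨hA, hns⟩, rfl⟩
  rwa [hstar_fix] at h1

lemma hstar_link [Finite α] [M.Finite] (hB : M.IsBase B) (hB' : M.IsBase B')
    (hsub : B' ⊆ hstar M B) : hstar M B' = hstar M B := by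
  apply subset_antisymm
  · have h1 : hstar M B' ⊆ towerStep M (hstar M) B := by
      refine subset_union_right.trans' ?_
      refine subset_sUnion_of_mem ?_
      exact mem_union_right _ ⟨B', ⟨hB', Or.inl hsub⟩, rfl⟩
    rwa [hstar_fix] at h1
  · have h1 : hstar M B ⊆ towerStep M (hstar M) B' := by
      refine subset_union_right.trans' ?_
      refine subset_sUnion_of_mem ?_
      exact mem_union_right _ ⟨B, ⟨hB, Or.inr hsub⟩, rfl⟩
    rwa [hstar_fix] at h1

lemma hstar_min [Finite α] [M.Finite] (g : Set α → Set α)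
    (hg1 : ∀ B, M.IsBase B → B ⊆ g B)
    (hg2 : ∀ B, M.IsBase B → ∀ A, A ⊆ g B → ¬ M.Spanning A → M.closure A ⊆ g B)
    (hg3 : ∀ B B', M.IsBase B → M.IsBase B' → B' ⊆ g B → g B' = g B) :
    ∀ B, M.IsBase B → hstar M B ⊆ g B := by
  suffices h : ∀ n B, M.IsBase B → towerSeq M n B ⊆ g B from fun B hB => h _ B hB
  intro n
  induction n with
  | zero => exact fun B hB => hg1 B hB
  | succ n ih =>
    intro B hB
    refine union_subset (ih B hB) ?_
    refine sUnion_subset ?_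
    rintro T (⟨A, ⟨hA1, hA2⟩, rfl⟩ | ⟨B'', ⟨hB''1, hB''2⟩, rfl⟩)
    · exact hg2 B hB A (hA1.trans (ih B hB)) hA2
    · rcases hB''2 with h | h
      · rw [← hg3 B B'' hB hB''1 (h.trans (ih B hB))]
        exact ih B'' hB''1
      · have hBg : B ⊆ g B'' := h.trans (ih B'' hB''1)
        rw [hg3 B'' B hB''1 hB hBg]
        exact ih B'' hB''1

end HStar
section Erect

variable {M : Matroid α} {A B B' I J S X Y C D : Set α} {e f x : α}

theorem exists_erection [Finite α] [M.Finite] (h : Set α → Set α)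
    (hg1 : ∀ B, M.IsBase B → B ⊆ h B) (hgE : ∀ B, M.IsBase B → h B ⊆ M.E)
    (hg2 : ∀ B, M.IsBase B → ∀ A, A ⊆ h B → ¬ M.Spanning A → M.closure A ⊆ h B)
    (hg3 : ∀ B B', M.IsBase B → M.IsBase B' → B' ⊆ h B → h B' = h B)
    (hgne : ∀ B, M.IsBase B → h B ≠ M.E) :
    ∃ N₂ : Matroid α, IsTruncationOf M N₂ ∧
      ∀ B x, M.IsBase B → x ∈ M.E → x ∉ h B → N₂.Indep (insert x B) := by
  classical
  set r := mrk M with hr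
  set Ind : Set α → Prop := fun I => M.Indep I ∨ (I ⊆ M.E ∧ I.ncard = r + 1 ∧
    (∀ f ∈ I, M.Indep (I \ {f})) ∧ ∀ B, M.IsBase B → B ⊆ I → ¬ I ⊆ h B) with hInd
  have hcard_indep : ∀ I, M.Indep I → I.ncard ≤ r := by
    intro I hI
    rw [← hI.nr_eq]
    exact nr_le_mrk M I
  have hIndcard : ∀ I, Ind I → I.ncard ≤ r + 1 := by
    rintro I (hI | hI)
    · exact (hcard_indep I hI).trans (by omega)
    · omega
  have hIndMIndep : ∀ I, Ind I → I.ncard ≤ r → M.Indep I := by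
    rintro I (hI | hI) hc
    · exact hI
    · omega
  have hsubset_ground : ∀ ⦃I⦄, Ind I → I ⊆ M.E := by
    rintro I (hI | hI)
    · exact hI.subset_ground
    · exact hI.1
  have hempty : Ind ∅ := Or.inl M.empty_indep
  have hsubset : ∀ ⦃I J⦄, Ind J → I ⊆ J → Ind I := by
    rintro I J hJ hIJ
    rcases hJ with hJ | ⟨hJE, hJcard, hJdel, hJblk⟩
    · exact Or.inl (hJ.subset hIJ)
    · by_cases hIJeq : I = J
      · subst hIJeq; exact Or.inr ⟨hJE, hJcard, hJdel, hJblk⟩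
      · obtain ⟨f, hfJ, hfI⟩ := exists_of_ssubset ⟨hIJ, fun hJI => hIJeq (subset_antisymm hIJ hJI)⟩
        exact Or.inl ((hJdel f hfJ).subset (subset_diff_singleton hIJ hfI))
  -- the key insertion lemma
  have hkey : ∀ B x, M.IsBase B → x ∈ M.E → x ∉ h B → Ind (insert x B) := by
    intro B x hB hxE hxh
    have hxB : x ∉ B := fun hc => hxh (hg1 B hB hc)
    have hBfin : B.Finite := M.set_finite B hB.subset_ground
    have hBcard : B.ncard = r := hB.nr_ground_eq.symm
    refine Or.inr ⟨insert_subset hxE hB.subset_ground, ?_, ?_, ?_⟩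
    · rw [Set.ncard_insert_of_notMem hxB hBfin, hBcard]
    · intro f hf
      rcases mem_insert_iff.mp hf with rfl | hfB
      · rw [Set.insert_diff_self_of_notMem hxB]
        exact hB.indep
      · by_contra hdep
        have hfx : x ∉ ({f} : Set α) := by
          simp only [mem_singleton_iff]
          rintro rfl; exact hxB hfB
        have hrw : insert x B \ {f} = insert x (B \ {f}) := insert_diff_of_notMem _ hfx
        have hind' : M.Indep (B \ {f}) := hB.indep.diff _
        have hxcl : x ∈ M.closure (B \ {f}) := by
          have hD : M.Dep (insert x (B \ {f})) :=
            ⟨by rwa [hrw] at hdep, insert_subset hxE (diff_subset.trans hB.subset_ground)⟩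
          rw [hind'.insert_dep_iff] at hD
          exact hD.1
        have hns : ¬ M.Spanning (B \ {f}) := by
          apply not_spanning_of_nr_lt (diff_subset.trans hB.subset_ground)
          rw [hind'.nr_eq, Set.ncard_diff_singleton_of_mem hfB]
          have : 0 < B.ncard := (Set.ncard_pos hBfin).mpr ⟨f, hfB⟩
          omega
        exact hxh (hg2 B hB _ (diff_subset.trans (hg1 B hB)) hns hxcl)
    · intro B' hB' hB'sub hsub
      have hBsub : B ⊆ h B' := (subset_insert x B).trans hsub
      have := hg3 B' B hB' hB hBsub
      exact hxh (this ▸ hsub (mem_insert x B))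
  have haug : ∀ ⦃I J⦄, Ind I → Ind J → I.ncard < J.ncard →
      ∃ e ∈ J, e ∉ I ∧ Ind (insert e I) := by
    intro I J hI hJ hlt
    have hIE := hsubset_ground hI
    have hJE := hsubset_ground hJ
    have hIfin : I.Finite := M.set_finite I hIE
    have hJfin : J.Finite := M.set_finite J hJE
    have hJc := hIndcard J hJ
    have hInd : M.Indep I := hIndMIndep I hI (by omega)
    by_cases hJM : M.Indep J
    · have hen : I.encard < J.encard := by
        rw [← hIfin.cast_ncard_eq, ← hJfin.cast_ncard_eq]
        exact_mod_cast hlt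
      obtain ⟨y, hy, hyind⟩ := hInd.augment hJM hen
      exact ⟨y, hy.1, hy.2, Or.inl hyind⟩
    · obtain ⟨hJE', hJcard, hJdel, hJblk⟩ := hJ.resolve_left hJM
      obtain ⟨j, hj⟩ : J.Nonempty := (Set.ncard_pos hJfin).mp (by omega)
      by_cases hIr : I.ncard = r
      · -- the hard case : I is a base of M
        have hIbase : M.IsBase I := base_of_indep_nr hInd hIr
        by_contra hcon
        have hJh : J ⊆ h I := by
          intro y hyJ
          by_cases hyI : y ∈ I
          · exact hg1 I hIbase hyI
          have hyE : y ∈ M.E := hJE hyJ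
          have hynotind : ¬ Ind (insert y I) := by
            intro hind
            exact hcon ⟨y, hyJ, hyI, hind⟩
          have hcard : (insert y I).ncard = r + 1 := by
            rw [Set.ncard_insert_of_notMem hyI hIfin, hIr]
          have hnM : ¬ M.Indep (insert y I) := by
            intro hmi
            have := hcard_indep _ hmi
            omega
          by_cases hdel : ∀ f ∈ insert y I, M.Indep ((insert y I) \ {f})
          · have hblk : ¬ (∀ B, M.IsBase B → B ⊆ insert y I → ¬ insert y I ⊆ h B) := by
              intro hblk
              exact hynotind (Or.inr ⟨insert_subset hyE hIE, hcard, hdel, hblk⟩)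
            rw [not_forall] at hblk
            obtain ⟨B, hblk⟩ := hblk
            rw [not_forall] at hblk
            obtain ⟨hB, hblk⟩ := hblk
            rw [not_forall] at hblk
            obtain ⟨hBsub, hblk⟩ := hblk
            rw [not_not] at hblk
            have heq := hg3 B I hB hIbase ((subset_insert y I).trans hblk)
            exact heq ▸ hblk (mem_insert y I)
          · rw [not_forall] at hdel
            obtain ⟨f, hdel⟩ := hdel
            rw [_root_.not_imp] at hdel
            obtain ⟨hf, hfdep⟩ := hdel
            have hfy : f ≠ y := by
              rintro rfl
              rw [Set.insert_diff_self_of_notMem hyI] at hfdep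
              exact hfdep hInd
            have hfI : f ∈ I := (mem_insert_iff.mp hf).resolve_left (fun hc => hfy hc)
            have hyf : y ∉ ({f} : Set α) := by
              simp only [mem_singleton_iff]; rintro rfl; exact hfy rfl
            have hrw : insert y I \ {f} = insert y (I \ {f}) := insert_diff_of_notMem _ hyf
            have hind' : M.Indep (I \ {f}) := hInd.diff _
            have hycl : y ∈ M.closure (I \ {f}) := by
              have hD : M.Dep (insert y (I \ {f})) :=
                ⟨by rwa [hrw] at hfdep, insert_subset hyE (diff_subset.trans hIE)⟩
              rw [hind'.insert_dep_iff] at hD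
              exact hD.1
            have hns : ¬ M.Spanning (I \ {f}) := by
              apply not_spanning_of_nr_lt (diff_subset.trans hIE)
              rw [hind'.nr_eq, Set.ncard_diff_singleton_of_mem hfI]
              have : 0 < I.ncard := (Set.ncard_pos hIfin).mpr ⟨f, hfI⟩
              omega
            exact hg2 I hIbase _ (diff_subset.trans (hg1 I hIbase)) hns hycl
        -- contradiction with J's blocking condition
        have hB₀ : M.IsBase (J \ {j}) := by
          refine base_of_indep_nr (hJdel j hj) ?_
          rw [Set.ncard_diff_singleton_of_mem hj, hJcard]
          omega
        refine hJblk (J \ {j}) hB₀ diff_subset ?_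
        rw [hg3 I (J \ {j}) hIbase hB₀ (diff_subset.trans hJh)]
        exact hJh
      · -- easy case : augment from J \ {j}
        have hJ' : M.Indep (J \ {j}) := hJdel j hj
        have hIc : I.ncard ≤ r := (hcard_indep I hInd)
        have hIlt : I.ncard < r := by omega
        have hcard' : (J \ {j}).ncard = r := by
          rw [Set.ncard_diff_singleton_of_mem hj, hJcard]
          omega
        have hen : I.encard < (J \ {j}).encard := by
          rw [← hIfin.cast_ncard_eq, ← hJfin.diff.cast_ncard_eq, hcard']
          exact_mod_cast hIlt
        obtain ⟨y, hy, hyind⟩ := hInd.augment hJ' hen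
        exact ⟨y, hy.1.1, hy.2, Or.inl hyind⟩
  -- build the matroid
  set N₂ : Matroid α := (IndepMatroid.ofFinite M.ground_finite Ind hempty hsubset
    haug hsubset_ground).matroid with hN₂
  have hN₂E : N₂.E = M.E := by simp [hN₂]
  haveI hN₂fin : N₂.Finite := ⟨hN₂E ▸ M.ground_finite⟩
  have hN₂indep : ∀ I, N₂.Indep I ↔ Ind I := by
    intro I; simp [hN₂]
  have hnr_le : ∀ X : Set α, nr N₂ X ≤ r + 1 := by
    intro X
    obtain ⟨I, hI, hIc⟩ := exists_basis'_nr N₂ X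
    rw [← hIc]
    exact hIndcard I ((hN₂indep I).mp hI.indep)
  have hmrk₂ : mrk N₂ = r + 1 := by
    refine le_antisymm (hnr_le N₂.E) ?_
    obtain ⟨B, hB⟩ := M.exists_isBase
    obtain ⟨y, hyE, hyh⟩ := exists_of_ssubset (ssubset_iff_subset_ne.mpr ⟨hgE B hB, hgne B hB⟩)
    have hkI := hkey B y hB hyE hyh
    have hyB : y ∉ B := fun hc => hyh (hg1 B hB hc)
    have hBfin : B.Finite := M.set_finite B hB.subset_ground
    have hBcard : B.ncard = r := hB.nr_ground_eq.symm
    have h1 : (insert y B).ncard ≤ nr N₂ N₂.E := by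
      refine ncard_le_nr_s12 ((hN₂indep _).mpr hkI) ?_
      rw [hN₂E]
      exact insert_subset hyE hB.subset_ground
    rw [Set.ncard_insert_of_notMem hyB hBfin, hBcard] at h1
    exact h1
  refine ⟨N₂, ⟨hN₂E.symm, ?_⟩, fun B x hB hx hxh => (hN₂indep _).mpr (hkey B x hB hx hxh)⟩
  intro X hX
  rw [hmrk₂]
  simp only [Nat.add_sub_cancel]
  apply le_antisymm
  · apply le_min
    · obtain ⟨I, hI, hIc⟩ := exists_basis'_nr M X
      rw [← hIc]
      exact ncard_le_nr_s12 ((hN₂indep I).mpr (Or.inl hI.indep)) hI.subset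
    · exact nr_le_mrk M X
  · obtain ⟨I, hI, hIc⟩ := exists_basis'_nr N₂ X
    rcases (hN₂indep I).mp hI.indep with hmi | h2
    · have : I.ncard ≤ nr M X := ncard_le_nr_s12 hmi hI.subset
      rw [hIc] at this
      exact (min_le_left _ _).trans this
    · obtain ⟨j, hj⟩ : I.Nonempty := by
        refine (Set.ncard_pos ?_).mp (by omega)
        exact M.set_finite I (h2.1.trans (le_refl _)) |>.subset (Subset.rfl)
      have h3 : (I \ {j}).ncard ≤ nr M X :=
        ncard_le_nr_s12 (h2.2.2.1 j hj) (diff_subset.trans hI.subset)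
      have hIfin : I.Finite := M.set_finite I h2.1
      rw [Set.ncard_diff_singleton_of_mem hj, h2.2.1] at h3
      simp only [Nat.add_sub_cancel] at h3
      exact (min_le_right _ _).trans h3

end Erect
section Trunc

variable {M N : Matroid α} {A B B' I J S X Y C D : Set α} {e f x : α}

lemma trunc_indep_of_M [M.Finite] [N.Finite] (hE : M.E = N.E)
    (htr : ∀ X ⊆ M.E, nr M X = min (nr N X) (mrk N - 1))
    (hI : M.Indep I) : N.Indep I := by
  have hIE : I ⊆ M.E := hI.subset_ground
  have h1 := htr I hIE
  rw [hI.nr_eq] at h1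
  have h2 : nr N I ≤ I.ncard := nr_le_ncard I (M.set_finite I hIE)
  rw [indep_iff_nr (hE ▸ hIE)]
  omega

lemma trunc_indep_of_N [M.Finite] [N.Finite] (hE : M.E = N.E)
    (htr : ∀ X ⊆ M.E, nr M X = min (nr N X) (mrk N - 1))
    (hNr : mrk N = mrk M + 1)
    (hI : N.Indep I) (hc : I.ncard ≤ mrk M) : M.Indep I := by
  have hIE : I ⊆ M.E := hE ▸ hI.subset_ground
  have h1 := htr I hIE
  rw [hI.nr_eq] at h1
  rw [indep_iff_nr hIE]
  omega

lemma trunc_circuit_of_N [M.Finite] [N.Finite] (hE : M.E = N.E)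
    (htr : ∀ X ⊆ M.E, nr M X = min (nr N X) (mrk N - 1))
    (hNr : mrk N = mrk M + 1)
    (hD : _root_.IsCircuit N D) (hc : D.ncard ≤ mrk M + 1) : _root_.IsCircuit M D := by
  refine ⟨hE ▸ hD.1, ?_, ?_⟩
  · intro hind
    exact hD.dep (trunc_indep_of_M hE htr hind)
  · intro g hg
    have hfin : D.Finite := N.set_finite D hD.1
    refine trunc_indep_of_N hE htr hNr (hD.2.2 g hg) ?_
    rw [Set.ncard_diff_singleton_of_mem hg]
    have : 0 < D.ncard := (Set.ncard_pos hfin).mpr ⟨g, hg⟩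
    omega

lemma trunc_closure_agree [M.Finite] [N.Finite] (hE : M.E = N.E)
    (htr : ∀ X ⊆ M.E, nr M X = min (nr N X) (mrk N - 1))
    (hNr : mrk N = mrk M + 1)
    (hX : X ⊆ M.E) (hns : ¬ M.Spanning X) : M.closure X = N.closure X := by
  have hXN : X ⊆ N.E := hE ▸ hX
  have h1 : nr M X + 1 ≤ mrk M := nr_add_one_le_mrk_of_not_spanning hX hns
  have h2 : nr N X = nr M X := by have h3 := htr X hX; omega
  ext y
  constructor
  · intro hy
    have hyE : y ∈ M.E := M.mem_ground_of_mem_closure hy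
    rw [mem_closure_iff_nr hX hyE] at hy
    rw [mem_closure_iff_nr hXN (hE ▸ hyE)]
    have h4 := htr (insert y X) (insert_subset hyE hX)
    omega
  · intro hy
    have hyE : y ∈ M.E := hE ▸ N.mem_ground_of_mem_closure hy
    rw [mem_closure_iff_nr hXN (hE ▸ hyE)] at hy
    rw [mem_closure_iff_nr hX hyE]
    have h4 := htr (insert y X) (insert_subset hyE hX)
    omega

lemma trunc_cyclic_ground [M.Finite] [N.Finite] (hE : M.E = N.E)
    (htr : ∀ X ⊆ M.E, nr M X = min (nr N X) (mrk N - 1))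
    (hNr : mrk N = mrk M + 1) : Cyclic M M.E := by
  refine cyclic_ground_of_no_coloop (fun x hx => ?_)
  have h1 : mrk N ≤ nr N (N.E \ {x}) + 1 := nr_le_nr_diff_singleton_add_one N N.E x
  have h2 := htr (M.E \ {x}) diff_subset
  rw [hE] at h2
  rw [spanning_iff_nr diff_subset, hE]
  omega

end Trunc
/-- Let `𝓒` be a family of non-spanning circuits of `M` and let `N` be
the free erection of `M`. If every cyclic flat of `M` is a union of circuits in `𝓒`,
then every cyclic flat of `N` is a union of circuits in `𝓒`. -/
theorem cyclicFlat_union_of_freeErection [Fintype α] (M N : Matroid α)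
    (𝓒 : Set (Set α)) (h𝓒 : ∀ C ∈ 𝓒, _root_.IsCircuit M C ∧ ¬ M.Spanning C)
    (hN : IsFreeErectionOf N M)
    (hM : ∀ F, M.IsFlat F → Cyclic M F → ∀ e ∈ F, ∃ C ∈ 𝓒, C ⊆ F ∧ e ∈ C) :
    ∀ F, N.IsFlat F → Cyclic N F → ∀ e ∈ F, ∃ C ∈ 𝓒, C ⊆ F ∧ e ∈ C := by
  classical
  obtain ⟨hNer, hNmax⟩ := hN
  rcases hNer with rfl | hT
  · exact hM
  intro F hF hFcyc e heF
  haveI hMfin : M.Finite := ⟨Set.toFinite _⟩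
  haveI hNfin : N.Finite := ⟨Set.toFinite _⟩
  obtain ⟨hE, htr⟩ := hT
  have hFN : F ⊆ N.E := hF.subset_ground
  have heE : e ∈ M.E := hE ▸ hFN heF
  -- degenerate case : mrk N = 0
  by_cases hN0 : mrk N = 0
  · have hsp0 : N.Spanning ∅ := by
      rw [spanning_iff_nr (empty_subset _)]
      have h1 : nr N ∅ ≤ mrk N := nr_le_mrk N ∅
      omega
    have hFE : F = N.E := by
      refine subset_antisymm hFN ?_
      have h1 : N.closure ∅ ⊆ N.closure F := N.closure_subset_closure (empty_subset F)
      rw [hsp0.closure_eq, hF.closure] at h1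
      exact h1
    have hcyc : Cyclic M M.E := by
      refine ⟨Subset.rfl, fun x hx => ?_⟩
      refine ⟨{x}, ⟨singleton_subset_iff.mpr hx, ?_, ?_⟩, singleton_subset_iff.mpr hx, rfl⟩
      · intro hind
        have h1 := htr {x} (singleton_subset_iff.mpr hx)
        rw [hind.nr_eq, Set.ncard_singleton] at h1
        have h2 : nr N {x} ≤ mrk N := nr_le_mrk N {x}
        omega
      · intro g hg
        rw [mem_singleton_iff] at hg
        subst hg
        rw [Set.diff_self]
        exact M.empty_indep
    obtain ⟨C, hC𝓒, hCsub, heC⟩ := hM M.E M.ground_isFlat hcyc e heE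
    exact ⟨C, hC𝓒, hCsub.trans (by rw [hE, ← hFE]), heC⟩
  -- now mrk N = mrk M + 1
  have hNr : mrk N = mrk M + 1 := by
    have h1 := htr M.E Subset.rfl
    have h2 : nr N M.E = mrk N := by rw [hE]; rfl
    have h3 : mrk M = nr M M.E := rfl
    rw [h2] at h1
    omega
  set r := mrk M with hrdef
  -- the case r = 0 is contradictory (using hM on the ground set)
  by_cases hr0 : r = 0
  · exfalso
    have hcyc := trunc_cyclic_ground hE htr hNr
    obtain ⟨C, hC𝓒, hCsub, heC⟩ := hM M.E M.ground_isFlat hcyc e heE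
    obtain ⟨hCcirc, hCns⟩ := h𝓒 C hC𝓒
    apply hCns
    rw [spanning_iff_nr hCcirc.1]
    have := nr_le_mrk M C
    omega
  -- get a circuit of N through e inside F
  obtain ⟨D, hD, hDF, heD⟩ := hFcyc.2 e heF
  by_cases hFE : F = N.E
  · have hcyc := trunc_cyclic_ground hE htr hNr
    obtain ⟨C, hC𝓒, hCsub, heC⟩ := hM M.E M.ground_isFlat hcyc e heE
    exact ⟨C, hC𝓒, hCsub.trans (by rw [hE, ← hFE]), heC⟩
  have hFME : F ⊆ M.E := hE ▸ hFN
  have hFr_le : nr N F ≤ r := by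
    by_contra hcon
    apply hFE
    have h1 : nr N F ≤ mrk N := nr_le_mrk N F
    have h2 : nr N F = mrk N := by omega
    have hsp : N.Spanning F := (spanning_iff_nr hFN).mpr h2
    rw [← hF.closure, hsp.closure_eq]
  -- D is a circuit of M
  have hDcard : D.ncard ≤ r + 1 := by
    have h1 := hD.nr_add_one
    have h2 : nr N D ≤ nr N F := nr_mono hDF
    omega
  have hDM : _root_.IsCircuit M D := trunc_circuit_of_N hE htr hNr hD hDcard
  by_cases hFlow : nr N F < r
  · -- low-rank flat : it is a cyclic flat of M
    have hFns : ¬ M.Spanning F := by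
      apply not_spanning_of_nr_lt hFME
      have h1 := htr F hFME
      omega
    have hMcl : M.closure F = F := by
      rw [trunc_closure_agree hE htr hNr hFME hFns, hF.closure]
    have hMF : M.IsFlat F := hMcl ▸ flat_closure M F
    have hMcyc : Cyclic M F := by
      refine ⟨hFME, fun x hx => ?_⟩
      obtain ⟨D', hD', hD'F, hxD'⟩ := hFcyc.2 x hx
      have hD'card : D'.ncard ≤ r + 1 := by
        have h1 := hD'.nr_add_one
        have h2 : nr N D' ≤ nr N F := nr_mono hD'F
        omega
      exact ⟨D', trunc_circuit_of_N hE htr hNr hD' hD'card, hD'F, hxD'⟩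
    exact hM F hMF hMcyc e heF
  · -- F is a hyperplane of N
    have hFr : nr N F = r := by omega
    obtain ⟨IB, hIB⟩ := N.exists_isBasis F hFN
    have hIBcard : IB.ncard = r := by
      have := nr_eq_of_basis' hIB.isBasis'
      omega
    have hIBM : M.Indep IB := trunc_indep_of_N hE htr hNr hIB.indep (by omega)
    have hIBbase : M.IsBase IB := base_of_indep_nr hIBM hIBcard
    have hFeq : F = N.closure IB := (hIB.closure_eq_closure.trans hF.closure).symm
    -- validity of B ↦ N.closure B
    have hg1 : ∀ B, M.IsBase B → B ⊆ N.closure B :=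
      fun B hB => N.subset_closure B (hE ▸ hB.subset_ground)
    have hgE : ∀ B, M.IsBase B → N.closure B ⊆ M.E :=
      fun B _ => hE ▸ N.closure_subset_ground B
    have hg2 : ∀ B, M.IsBase B → ∀ A, A ⊆ N.closure B → ¬ M.Spanning A →
        M.closure A ⊆ N.closure B := by
      intro B hB A hA hns
      rw [trunc_closure_agree hE htr hNr (hA.trans (hgE B hB)) hns]
      exact (N.closure_subset_closure hA).trans (by rw [Matroid.closure_closure])
    have hclr : ∀ B, M.IsBase B → nr N (N.closure B) = r := by
      intro B hB
      rw [nr_closure_eq, (trunc_indep_of_M hE htr hB.indep).nr_eq, hrdef, hB.nr_ground_eq]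
    have hg3 : ∀ B B', M.IsBase B → M.IsBase B' → B' ⊆ N.closure B →
        N.closure B' = N.closure B := by
      intro B B' hB hB' hsub
      apply subset_antisymm
      · exact (N.closure_subset_closure hsub).trans (by rw [Matroid.closure_closure])
      · intro y hy
        have hyE : y ∈ N.E := N.mem_ground_of_mem_closure hy
        have hB'N : N.Indep B' := trunc_indep_of_M hE htr hB'.indep
        have hB'E : B' ⊆ N.E := hB'N.subset_ground
        rw [mem_closure_iff_nr hB'E hyE]
        have h1 : nr N (insert y B') ≤ nr N (N.closure B) :=
          nr_mono (insert_subset hy hsub)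
        have h2 : nr N B' ≤ nr N (insert y B') := nr_mono (subset_insert y B')
        have h3 : nr N B' = r := by rw [hB'N.nr_eq, hrdef, hB'.nr_ground_eq]
        have h4 := hclr B hB
        omega
    have hgne : ∀ B, M.IsBase B → N.closure B ≠ M.E := by
      intro B hB hc
      have h1 := hclr B hB
      rw [hc] at h1
      have h2 : nr N M.E = mrk N := by rw [hE]; rfl
      omega
    -- the minimal block function is below B ↦ N.closure B
    have hmin := hstar_min (fun B => N.closure B) hg1 hg2 hg3
    have hstarne : ∀ B, M.IsBase B → hstar M B ≠ M.E := by
      intro B hB hc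
      apply hgne B hB
      refine subset_antisymm (hgE B hB) ?_
      rw [← hc]
      exact hmin B hB
    obtain ⟨N₂, hN₂tr, hN₂ins⟩ := exists_erection (hstar M)
      (fun B hB => base_subset_hstar hB) (fun B hB => hstar_subset_ground hB)
      (fun B hB A hA hns => hstar_mclosed hB hA hns)
      (fun B B' hB hB' hsub => hstar_link hB hB' hsub) hstarne
    -- by freeness, N has the fewest dependencies, so N.closure IB ⊆ hstar M IB
    have hsub1 : N.closure IB ⊆ hstar M IB := by
      intro y hy
      have hyE : y ∈ M.E := hE ▸ N.mem_ground_of_mem_closure hy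
      by_contra hyh
      have hind₂ := hN₂ins IB y hIBbase hyE hyh
      have hindN := hNmax N₂ (Or.inr hN₂tr) _ hind₂
      have hyIB : y ∉ IB := fun hc => hyh (base_subset_hstar hIBbase hc)
      have hIBN : N.Indep IB := hIB.indep
      rw [hIBN.insert_indep_iff_of_notMem hyIB] at hindN
      exact hindN.2 hy
    have hFstar : F = hstar M IB := by
      rw [hFeq]
      exact subset_antisymm hsub1 (hmin IB hIBbase)
    have hNice : Nice M F := hFstar ▸ nice_hstar hIBbase
    -- produce a non-spanning circuit of M through e inside F
    obtain ⟨D', hD', hD'ns, heD', hD'F⟩ :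
        ∃ D', _root_.IsCircuit M D' ∧ ¬ M.Spanning D' ∧ e ∈ D' ∧ D' ⊆ F := by
      by_cases hDsp : M.Spanning D
      · exact hNice e D hDM heD hDF
      · exact ⟨D, hDM, hDsp, heD, hDF⟩
    have hclD'F : M.closure D' ⊆ F := by
      rw [hFstar]
      exact hstar_mclosed hIBbase (hFstar ▸ hD'F) hD'ns
    obtain ⟨C, hC𝓒, hCsub, heC⟩ := hM (M.closure D') (flat_closure M D')
      (cyclic_closure_circuit hD') e (M.subset_closure D' hD'.1 heD')
    exact ⟨C, hC𝓒, hCsub.trans hclD'F, heC⟩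
end
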